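/- arXiv:1708.01430 — 7 statements merged into one kernel-verified Lean document; each statement's English description precedes it below -/
import Mathlib

section
/- For n ≥ 2 and a degree function d : Fin n → ℤ, there exists a unique map κ : S_n × S_n → {±1} (where the second argument ρ represents the permuted sequence g = ρ(f), i.e. g_i = f_{ρ⁻¹(i)}) such that (1) κ(στ, ρ) = κ(σ, τρ)·κ(τ, ρ) for all σ, τ, ρ ∈ S_n, and (2) κ(s_i, ρ) = (-1)^{d(ρ⁻¹(i))·d(ρ⁻¹(i+1))} for every adjacent transposition s_i = (i, i+1), 1 ≤ i ≤ n-1, and every ρ ∈ S_n. -/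
/-- The Koszul sign map property: `κ σ ρ` is the Koszul sign of correcting the
permuted sequence `g = ρ(f)` (i.e. `g i = f (ρ⁻¹ i)`) by `σ`, with degrees `d`. -/
def IsKoszul {n : ℕ} (d : Fin n → ℤ)
    (κ : Equiv.Perm (Fin n) → Equiv.Perm (Fin n) → ℤˣ) : Prop :=
  (∀ σ τ ρ, κ (σ * τ) ρ = κ σ (τ * ρ) * κ τ ρ) ∧
  (∀ (i : ℕ) (h : i + 1 < n) (ρ : Equiv.Perm (Fin n)),
    κ (Equiv.swap ⟨i, Nat.lt_of_succ_lt h⟩ ⟨i + 1, h⟩) ρ =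
      (-1 : ℤˣ) ^ (d (ρ⁻¹ ⟨i, Nat.lt_of_succ_lt h⟩) * d (ρ⁻¹ ⟨i + 1, h⟩)))

/-- Set of inversions of a permutation. -/
def invSet {n : ℕ} (ρ : Equiv.Perm (Fin n)) : Finset (Fin n × Fin n) :=
  Finset.univ.filter (fun p => p.1 < p.2 ∧ ρ p.2 < ρ p.1)

/-- Koszul sign of a permutation relative to the identity. -/
def kF {n : ℕ} (d : Fin n → ℤ) (ρ : Equiv.Perm (Fin n)) : ℤˣ :=
  ∏ p ∈ invSet ρ, (-1 : ℤˣ) ^ (d p.1 * d p.2)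

lemma units_self_mul (u : ℤˣ) : u * u = 1 := by
  rcases Int.units_eq_one_or u with h | h <;> simp [h]

lemma prod_mul_prod_eq_symmDiff {α : Type*} [DecidableEq α] (A B : Finset α)
    (f : α → ℤˣ) :
    (∏ x ∈ A, f x) * ∏ x ∈ B, f x = ∏ x ∈ (A \ B) ∪ (B \ A), f x := by
  have hA : A = (A \ B) ∪ (A ∩ B) := (Finset.sdiff_union_inter A B).symm
  have hB : B = (B \ A) ∪ (A ∩ B) := by
    rw [Finset.inter_comm]; exact (Finset.sdiff_union_inter B A).symm
  have h1 : (∏ x ∈ A, f x) = (∏ x ∈ A \ B, f x) * ∏ x ∈ A ∩ B, f x := by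
    rw [← Finset.prod_union (Finset.sdiff_disjoint.mono_right Finset.inter_subset_right), ← hA]
  have h2 : (∏ x ∈ B, f x) = (∏ x ∈ B \ A, f x) * ∏ x ∈ A ∩ B, f x := by
    rw [← Finset.prod_union (Finset.sdiff_disjoint.mono_right Finset.inter_subset_left), ← hB]
  rw [h1, h2, Finset.prod_union (disjoint_sdiff_sdiff),
    mul_mul_mul_comm, units_self_mul, mul_one]

/-- For an adjacent swap, the swap preserves order except on the pair `{u, v}`. -/
lemma swap_lt_iff {n : ℕ} {u v : Fin n} (hadj : (u : ℕ) + 1 = (v : ℕ))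
    {x y : Fin n} (hne : x ≠ y)
    (hno : ¬((x = u ∧ y = v) ∨ (x = v ∧ y = u))) :
    Equiv.swap u v x < Equiv.swap u v y ↔ x < y := by
  push_neg at hno
  have hval : ∀ a b : Fin n, a ≠ b → (a : ℕ) ≠ (b : ℕ) := fun a b h hh => h (Fin.ext hh)
  rcases eq_or_ne x u with rfl | hxu
  · have hyv : y ≠ v := fun h => (hno.1 rfl h).elim
    have hyu : y ≠ x := hne.symm
    rw [Equiv.swap_apply_left, Equiv.swap_apply_of_ne_of_ne hyu hyv]
    have h1 := hval _ _ hyu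
    have h2 := hval _ _ hyv
    simp only [Fin.lt_def]; omega
  · rcases eq_or_ne x v with rfl | hxv
    · have hyu : y ≠ u := fun h => (hno.2 rfl h).elim
      have hyv : y ≠ x := hne.symm
      rw [Equiv.swap_apply_right, Equiv.swap_apply_of_ne_of_ne hyu hyv]
      have h1 := hval _ _ hyu
      have h2 := hval _ _ hyv
      simp only [Fin.lt_def]; omega
    · rw [Equiv.swap_apply_of_ne_of_ne hxu hxv]
      rcases eq_or_ne y u with rfl | hyu
      · rw [Equiv.swap_apply_left]
        have h1 := hval _ _ hxu
        have h2 := hval _ _ hxv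
        simp only [Fin.lt_def]; omega
      · rcases eq_or_ne y v with rfl | hyv
        · rw [Equiv.swap_apply_right]
          have h1 := hval _ _ hxu
          have h2 := hval _ _ hxv
          simp only [Fin.lt_def]; omega
        · rw [Equiv.swap_apply_of_ne_of_ne hyu hyv]

lemma invSet_swap_mul {n : ℕ} {u v : Fin n} (hadj : (u : ℕ) + 1 = (v : ℕ))
    (ρ : Equiv.Perm (Fin n)) :
    (invSet (Equiv.swap u v * ρ) \ invSet ρ) ∪ (invSet ρ \ invSet (Equiv.swap u v * ρ)) =
      {if ρ⁻¹ u < ρ⁻¹ v then (ρ⁻¹ u, ρ⁻¹ v) else (ρ⁻¹ v, ρ⁻¹ u)} := by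
  have huv : u ≠ v := by intro h; rw [h] at hadj; omega
  have hulv : u < v := by rw [Fin.lt_def]; omega
  have hab : ρ⁻¹ u ≠ ρ⁻¹ v := fun h => huv (ρ⁻¹.injective h)
  ext ⟨x, y⟩
  simp only [invSet, Finset.mem_union, Finset.mem_sdiff, Finset.mem_filter,
    Finset.mem_univ, true_and, Finset.mem_singleton]
  simp only [Equiv.Perm.mul_apply]
  by_cases hxy : x < y
  · have hne : (ρ x) ≠ (ρ y) := fun h => hxy.ne (ρ.injective h)
    by_cases hpair : (ρ x = u ∧ ρ y = v) ∨ (ρ x = v ∧ ρ y = u)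
    · rcases hpair with ⟨h1, h2⟩ | ⟨h1, h2⟩
      · have hxa : x = ρ⁻¹ u := by rw [← h1, Equiv.Perm.inv_def, Equiv.symm_apply_apply]
        have hyb : y = ρ⁻¹ v := by rw [← h2, Equiv.Perm.inv_def, Equiv.symm_apply_apply]
        have hlt : ρ⁻¹ u < ρ⁻¹ v := hxa ▸ hyb ▸ hxy
        rw [h1, h2, Equiv.swap_apply_left, Equiv.swap_apply_right, if_pos hlt]
        constructor
        · intro _; rw [hxa, hyb]
        · intro _
          exact Or.inl ⟨⟨hxy, hulv⟩, fun hc => hulv.asymm hc.2⟩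
      · have hxa : x = ρ⁻¹ v := by rw [← h1, Equiv.Perm.inv_def, Equiv.symm_apply_apply]
        have hyb : y = ρ⁻¹ u := by rw [← h2, Equiv.Perm.inv_def, Equiv.symm_apply_apply]
        have hlt : ρ⁻¹ v < ρ⁻¹ u := hxa ▸ hyb ▸ hxy
        rw [h1, h2, Equiv.swap_apply_left, Equiv.swap_apply_right, if_neg hlt.asymm]
        constructor
        · intro _; rw [hxa, hyb]
        · intro _
          exact Or.inr ⟨⟨hxy, hulv⟩, fun hc => hulv.asymm hc.2⟩
    · have hiff := swap_lt_iff hadj (x := ρ y) (y := ρ x) hne.symm (by tauto)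
      have hRHS : ¬ ((x, y) = if ρ⁻¹ u < ρ⁻¹ v then (ρ⁻¹ u, ρ⁻¹ v) else (ρ⁻¹ v, ρ⁻¹ u)) := by
        intro h
        apply hpair
        split_ifs at h with hh <;> simp only [Prod.mk.injEq] at h <;> obtain ⟨h1, h2⟩ := h
        · exact Or.inl ⟨by rw [h1, Equiv.Perm.inv_def, Equiv.apply_symm_apply],
            by rw [h2, Equiv.Perm.inv_def, Equiv.apply_symm_apply]⟩
        · exact Or.inr ⟨by rw [h1, Equiv.Perm.inv_def, Equiv.apply_symm_apply],
            by rw [h2, Equiv.Perm.inv_def, Equiv.apply_symm_apply]⟩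
      simp only [hRHS, iff_false, hiff]
      tauto
  · constructor
    · rintro (⟨⟨h, _⟩, _⟩ | ⟨⟨h, _⟩, _⟩) <;> exact absurd h hxy
    · intro h
      exfalso
      apply hxy
      split_ifs at h with hh <;> simp only [Prod.mk.injEq] at h <;> obtain ⟨h1, h2⟩ := h <;>
        subst h1 <;> subst h2
      · exact hh
      · exact (hab.symm.lt_or_gt.resolve_right hh)

lemma kF_swap_mul {n : ℕ} (d : Fin n → ℤ) {u v : Fin n} (hadj : (u : ℕ) + 1 = (v : ℕ))
    (ρ : Equiv.Perm (Fin n)) :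
    kF d (Equiv.swap u v * ρ) = (-1 : ℤˣ) ^ (d (ρ⁻¹ u) * d (ρ⁻¹ v)) * kF d ρ := by
  have key : kF d (Equiv.swap u v * ρ) * kF d ρ = (-1 : ℤˣ) ^ (d (ρ⁻¹ u) * d (ρ⁻¹ v)) := by
    rw [kF, kF, prod_mul_prod_eq_symmDiff, invSet_swap_mul hadj]
    split_ifs <;> simp [mul_comm (d (Equiv.symm ρ v))]
  calc kF d (Equiv.swap u v * ρ)
      = kF d (Equiv.swap u v * ρ) * (kF d ρ * kF d ρ) := by rw [units_self_mul, mul_one]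
    _ = (kF d (Equiv.swap u v * ρ) * kF d ρ) * kF d ρ := (mul_assoc _ _ _).symm
    _ = (-1 : ℤˣ) ^ (d (ρ⁻¹ u) * d (ρ⁻¹ v)) * kF d ρ := by rw [key]

lemma kF_kappa_swap {n : ℕ} (d : Fin n → ℤ) {u v : Fin n} (hadj : (u : ℕ) + 1 = (v : ℕ))
    (ρ : Equiv.Perm (Fin n)) :
    kF d (Equiv.swap u v * ρ) * kF d ρ = (-1 : ℤˣ) ^ (d (ρ⁻¹ u) * d (ρ⁻¹ v)) := by
  rw [kF_swap_mul d hadj, mul_assoc, units_self_mul, mul_one]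

lemma kF_cocycle {n : ℕ} (d : Fin n → ℤ) (σ τ ρ : Equiv.Perm (Fin n)) :
    kF d (σ * τ * ρ) * kF d ρ =
      (kF d (σ * (τ * ρ)) * kF d (τ * ρ)) * (kF d (τ * ρ) * kF d ρ) := by
  rw [mul_assoc (kF d (σ * (τ * ρ))), ← mul_assoc (kF d (τ * ρ)), units_self_mul, one_mul,
    mul_assoc σ τ ρ]

/-- Existence and uniqueness of the Koszul sign map. -/
theorem koszul_exists_unique (n : ℕ) (hn : 2 ≤ n) (d : Fin n → ℤ) :
    ∃! κ : Equiv.Perm (Fin n) → Equiv.Perm (Fin n) → ℤˣ, IsKoszul d κ := by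
  refine ⟨fun σ ρ => kF d (σ * ρ) * kF d ρ, ⟨?_, ?_⟩, ?_⟩
  · intro σ τ ρ
    exact kF_cocycle d σ τ ρ
  · intro i h ρ
    exact kF_kappa_swap d (u := ⟨i, Nat.lt_of_succ_lt h⟩) (v := ⟨i + 1, h⟩) rfl ρ
  · rintro κ ⟨hmul, hswap⟩
    have hone : ∀ ρ, κ 1 ρ = 1 := by
      intro ρ
      have := hmul 1 1 ρ
      rw [one_mul, one_mul] at this
      exact right_eq_mul.mp this
    obtain ⟨m, rfl⟩ : ∃ m, n = m + 1 := ⟨n - 1, by omega⟩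
    funext σ ρ
    revert ρ
    have hσ : σ ∈ Submonoid.closure
        (Set.range fun i : Fin m ↦ Equiv.swap i.castSucc i.succ) := by
      rw [Equiv.Perm.mclosure_swap_castSucc_succ]; trivial
    induction hσ using Submonoid.closure_induction with
    | mem σ hσ =>
      obtain ⟨i, rfl⟩ := hσ
      intro ρ
      have h : (i : ℕ) + 1 < m + 1 := by omega
      have e1 := hswap (i : ℕ) h ρ
      have e2 := kF_kappa_swap d (u := ⟨(i : ℕ), Nat.lt_of_succ_lt h⟩)
        (v := ⟨(i : ℕ) + 1, h⟩) rfl ρ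
      exact e1.trans e2.symm
    | one =>
      intro ρ
      rw [hone, one_mul, units_self_mul]
    | mul σ τ hσ hτ ihσ ihτ =>
      intro ρ
      rw [hmul σ τ ρ, ihσ (τ * ρ), ihτ ρ, ← kF_cocycle d σ τ ρ]
end

section
/- Define a map κ₀ on words in the adjacent transpositions by κ₀(s_{i_1}⋯s_{i_m}, ρ) = κ₀(s_{i_1}, s_{i_2}⋯s_{i_m}ρ)·κ₀(s_{i_2}, s_{i_3}⋯s_{i_m}ρ)⋯κ₀(s_{i_m}, ρ) with κ₀(s_i, ρ) = (-1)^{d(ρ⁻¹(i))·d(ρ⁻¹(i+1))}. Then for every i ∈ {1,...,n-2} and every ρ ∈ S_n, the braid relation is κ₀-compatible: κ₀ evaluated along the word s_i s_{i+1} s_i at ρ equals κ₀ evaluated along the word s_{i+1} s_i s_{i+1} at ρ; concretely, both equal (-1)^{d(ρ⁻¹(i))d(ρ⁻¹(i+1)) + d(ρ⁻¹(i))d(ρ⁻¹(i+2)) + d(ρ⁻¹(i+1))d(ρ⁻¹(i+2))}. -/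
/-- The elementary Koszul sign of the adjacent transposition `s i = (i, i+1)`
applied to the permuted sequence `g = ρ(f)`. -/
def koszulBase {n : ℕ} (d : Fin n → ℤ) (i : ℕ) (h : i + 1 < n)
    (ρ : Equiv.Perm (Fin n)) : ℤˣ :=
  (-1 : ℤˣ) ^ (d (ρ⁻¹ ⟨i, Nat.lt_of_succ_lt h⟩) * d (ρ⁻¹ ⟨i + 1, h⟩))

/-- The braid relation is compatible with the word-evaluation κ₀. -/
theorem koszul_braid (n : ℕ) (d : Fin n → ℤ) (i : ℕ) (h : i + 1 + 1 < n)
    (ρ : Equiv.Perm (Fin n)) :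
    (koszulBase d i (Nat.lt_of_succ_lt h)
        (Equiv.swap ⟨i + 1, Nat.lt_of_succ_lt h⟩ ⟨i + 2, h⟩ *
          (Equiv.swap ⟨i, by omega⟩ ⟨i + 1, by omega⟩ * ρ)) *
      koszulBase d (i + 1) h (Equiv.swap ⟨i, by omega⟩ ⟨i + 1, by omega⟩ * ρ) *
      koszulBase d i (Nat.lt_of_succ_lt h) ρ =
    koszulBase d (i + 1) h
        (Equiv.swap ⟨i, by omega⟩ ⟨i + 1, by omega⟩ *
          (Equiv.swap ⟨i + 1, Nat.lt_of_succ_lt h⟩ ⟨i + 2, h⟩ * ρ)) *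
      koszulBase d i (Nat.lt_of_succ_lt h)
        (Equiv.swap ⟨i + 1, Nat.lt_of_succ_lt h⟩ ⟨i + 2, h⟩ * ρ) *
      koszulBase d (i + 1) h ρ) ∧
    koszulBase d i (Nat.lt_of_succ_lt h)
        (Equiv.swap ⟨i + 1, Nat.lt_of_succ_lt h⟩ ⟨i + 2, h⟩ *
          (Equiv.swap ⟨i, by omega⟩ ⟨i + 1, by omega⟩ * ρ)) *
      koszulBase d (i + 1) h (Equiv.swap ⟨i, by omega⟩ ⟨i + 1, by omega⟩ * ρ) *
      koszulBase d i (Nat.lt_of_succ_lt h) ρ =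
    (-1 : ℤˣ) ^ (d (ρ⁻¹ ⟨i, by omega⟩) * d (ρ⁻¹ ⟨i + 1, by omega⟩) +
      d (ρ⁻¹ ⟨i, by omega⟩) * d (ρ⁻¹ ⟨i + 2, h⟩) +
      d (ρ⁻¹ ⟨i + 1, by omega⟩) * d (ρ⁻¹ ⟨i + 2, h⟩)) := by
  have hab : (⟨i, by omega⟩ : Fin n) ≠ ⟨i + 1, by omega⟩ := by
    simp [Fin.ext_iff]
  have hac : (⟨i, by omega⟩ : Fin n) ≠ ⟨i + 2, h⟩ := by
    simp [Fin.ext_iff]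
  have hbc : (⟨i + 1, by omega⟩ : Fin n) ≠ ⟨i + 2, h⟩ := by
    simp [Fin.ext_iff]
  simp only [koszulBase, mul_inv_rev, Equiv.Perm.mul_apply, Equiv.swap_inv,
    Equiv.swap_apply_left, Equiv.swap_apply_right,
    Equiv.swap_apply_of_ne_of_ne hab hac,
    Equiv.swap_apply_of_ne_of_ne hab.symm hbc,
    Equiv.swap_apply_of_ne_of_ne hac.symm hbc.symm, ← zpow_add]
  constructor <;> · congr 1; ring
end

section
/- With the word-evaluation κ₀ as below, for all i, j ∈ {1,...,n-1} with |i - j| > 1 and every ρ ∈ S_n, κ₀ along the word s_i s_j at ρ equals κ₀ along the word s_j s_i at ρ, and both equal (-1)^{d(ρ⁻¹(i))d(ρ⁻¹(i+1)) + d(ρ⁻¹(j))d(ρ⁻¹(j+1))}. -/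
lemma koszulBase_swap_distant {n : ℕ} (d : Fin n → ℤ) (i j : ℕ)
    (hi : i + 1 < n) (hj : j + 1 < n) (hij : i + 1 < j ∨ j + 1 < i)
    (ρ : Equiv.Perm (Fin n)) :
    koszulBase d i hi (Equiv.swap ⟨j, Nat.lt_of_succ_lt hj⟩ ⟨j + 1, hj⟩ * ρ) =
      koszulBase d i hi ρ := by
  have h1 : (⟨i, Nat.lt_of_succ_lt hi⟩ : Fin n) ≠ ⟨j, Nat.lt_of_succ_lt hj⟩ := by
    simp only [ne_eq, Fin.mk.injEq]; omega
  have h2 : (⟨i, Nat.lt_of_succ_lt hi⟩ : Fin n) ≠ ⟨j + 1, hj⟩ := by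
    simp only [ne_eq, Fin.mk.injEq]; omega
  have h3 : (⟨i + 1, hi⟩ : Fin n) ≠ ⟨j, Nat.lt_of_succ_lt hj⟩ := by
    simp only [ne_eq, Fin.mk.injEq]; omega
  have h4 : (⟨i + 1, hi⟩ : Fin n) ≠ ⟨j + 1, hj⟩ := by
    simp only [ne_eq, Fin.mk.injEq]; omega
  simp [koszulBase, mul_inv_rev, Equiv.swap_apply_of_ne_of_ne, h1, h2, h3, h4]

/-- Distant commutation relations are compatible with the word-evaluation κ₀. -/
theorem koszul_distant_comm (n : ℕ) (d : Fin n → ℤ) (i j : ℕ)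
    (hi : i + 1 < n) (hj : j + 1 < n) (hij : i + 1 < j ∨ j + 1 < i)
    (ρ : Equiv.Perm (Fin n)) :
    (koszulBase d i hi (Equiv.swap ⟨j, Nat.lt_of_succ_lt hj⟩ ⟨j + 1, hj⟩ * ρ) *
        koszulBase d j hj ρ =
      koszulBase d j hj (Equiv.swap ⟨i, Nat.lt_of_succ_lt hi⟩ ⟨i + 1, hi⟩ * ρ) *
        koszulBase d i hi ρ) ∧
    koszulBase d i hi (Equiv.swap ⟨j, Nat.lt_of_succ_lt hj⟩ ⟨j + 1, hj⟩ * ρ) *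
        koszulBase d j hj ρ =
      (-1 : ℤˣ) ^ (d (ρ⁻¹ ⟨i, Nat.lt_of_succ_lt hi⟩) * d (ρ⁻¹ ⟨i + 1, hi⟩) +
        d (ρ⁻¹ ⟨j, Nat.lt_of_succ_lt hj⟩) * d (ρ⁻¹ ⟨j + 1, hj⟩)) := by
  rw [koszulBase_swap_distant d i j hi hj hij,
    koszulBase_swap_distant d j i hj hi hij.symm]
  exact ⟨mul_comm _ _, (zpow_add _ _ _).symm⟩
end

section
/- Let κ be the Koszul sign map determined by a degree function d. The map κ(-, ρ) : S_n → {±1} is a group homomorphism for some ρ ∈ S_n if and only if κ(-, e) : S_n → {±1} is a group homomorphism (e the identity), and in that case all the maps κ(-, ρ), ρ ∈ S_n, coincide. -/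
theorem koszul_hom_iff_hom_at_one (n : ℕ) (hn : 2 ≤ n) (d : Fin n → ℤ)
    (κ : Equiv.Perm (Fin n) → Equiv.Perm (Fin n) → ℤˣ) (hκ : IsKoszul d κ) :
    ((∃ ρ : Equiv.Perm (Fin n), ∀ σ τ, κ (σ * τ) ρ = κ σ ρ * κ τ ρ) ↔
      (∀ σ τ : Equiv.Perm (Fin n), κ (σ * τ) 1 = κ σ 1 * κ τ 1)) ∧
    ((∀ σ τ : Equiv.Perm (Fin n), κ (σ * τ) 1 = κ σ 1 * κ τ 1) →
      ∀ (ρ σ : Equiv.Perm (Fin n)), κ σ ρ = κ σ 1) := by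
  obtain ⟨c, -⟩ := hκ
  -- If κ(·,ρ) is a homomorphism, then κ(σ,·) is constant equal to κ(σ,ρ).
  have key : ∀ ρ : Equiv.Perm (Fin n),
      (∀ σ τ, κ (σ * τ) ρ = κ σ ρ * κ τ ρ) → ∀ σ μ, κ σ μ = κ σ ρ := by
    intro ρ h σ μ
    have h1 := c σ (μ * ρ⁻¹) ρ
    rw [h σ (μ * ρ⁻¹)] at h1
    have : μ * ρ⁻¹ * ρ = μ := by group
    rw [this] at h1
    exact mul_right_cancel h1.symm
  refine ⟨⟨?_, fun h => ⟨1, h⟩⟩, ?_⟩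
  · rintro ⟨ρ, hρ⟩ σ τ
    have k := key ρ hρ
    calc κ (σ * τ) 1 = κ σ (τ * 1) * κ τ 1 := c σ τ 1
      _ = κ σ 1 * κ τ 1 := by rw [(k σ (τ * 1)).trans (k σ 1).symm]
  · intro h ρ σ
    exact key 1 h σ ρ
end

section
/- Let n ≥ 3 and κ the Koszul sign map determined by a degree function d. The map κ(-, e) : S_n → {±1} is a group homomorphism if and only if either all the integers d(1),...,d(n) have the same parity, or exactly one of them is odd. -/
private lemma neg_one_zpow_eq_ite' (m : ℤ) :
    (-1 : ℤˣ) ^ m = if Even m then 1 else -1 := by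
  rcases Int.even_or_odd m with h | h
  · rw [if_pos h, h.neg_one_zpow]
  · rw [if_neg (by simpa [Int.not_even_iff_odd] using h)]
    obtain ⟨k, rfl⟩ := h
    have he : Even (2 * k) := ⟨k, two_mul k⟩
    rw [zpow_add, he.neg_one_zpow, one_mul, zpow_one]

private lemma neg_one_zpow_eq_iff {m k : ℤ} :
    (-1 : ℤˣ) ^ m = (-1 : ℤˣ) ^ k ↔ (Even m ↔ Even k) := by
  rw [neg_one_zpow_eq_ite', neg_one_zpow_eq_ite']
  by_cases hm : Even m <;> by_cases hk : Even k <;> simp [hm, hk]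

theorem koszul_hom_iff_parity (n : ℕ) (hn : 3 ≤ n) (d : Fin n → ℤ)
    (κ : Equiv.Perm (Fin n) → Equiv.Perm (Fin n) → ℤˣ) (hκ : IsKoszul d κ) :
    (∀ σ τ : Equiv.Perm (Fin n), κ (σ * τ) 1 = κ σ 1 * κ τ 1) ↔
      ((∀ i j : Fin n, d i % 2 = d j % 2) ∨ (∃! i : Fin n, Odd (d i))) := by
  obtain ⟨hcoc, hgen⟩ := hκ
  have h01 : (0 : ℕ) + 1 < n := by omega
  have z0 : Fin n := ⟨0, by omega⟩
  have z1 : Fin n := ⟨1, by omega⟩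
  constructor
  · -- forward direction
    intro H
    -- κ σ τ = κ σ 1 for all σ τ
    have key : ∀ σ τ, κ σ τ = κ σ 1 := by
      intro σ τ
      have h1 := hcoc σ τ 1
      rw [mul_one] at h1
      have h2 := H σ τ
      exact mul_right_cancel (h1.symm.trans h2)
    -- pairwise products have constant parity
    have pair : ∀ a b : Fin n, a ≠ b →
        (-1 : ℤˣ) ^ (d a * d b) = (-1 : ℤˣ) ^ (d ⟨0, by omega⟩ * d ⟨1, by omega⟩) := by
      intro a b hab
      set i0 : Fin n := ⟨0, by omega⟩
      set i1 : Fin n := ⟨1, by omega⟩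
      have hb0 : Equiv.swap a i0 b ≠ i0 := by
        intro h
        apply hab
        have := (Equiv.swap a i0).injective (a₂ := a) (by rw [h, Equiv.swap_apply_left])
        exact this.symm
      set π : Equiv.Perm (Fin n) := Equiv.swap (Equiv.swap a i0 b) i1 * Equiv.swap a i0
      have hπa : π a = i0 := by
        simp only [π, Equiv.Perm.mul_apply, Equiv.swap_apply_left]
        exact Equiv.swap_apply_of_ne_of_ne hb0.symm (by simp [i0, i1, Fin.ext_iff])
      have hπb : π b = i1 := by
        simp only [π, Equiv.Perm.mul_apply, Equiv.swap_apply_left]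
      have e1 := key (Equiv.swap ⟨0, Nat.lt_of_succ_lt h01⟩ ⟨0 + 1, h01⟩) π
      rw [hgen 0 h01 π, hgen 0 h01 1] at e1
      simp only [inv_one, Equiv.Perm.one_apply] at e1
      have ea : (π⁻¹ : Equiv.Perm (Fin n)) ⟨0, Nat.lt_of_succ_lt h01⟩ = a := by
        rw [show (⟨0, Nat.lt_of_succ_lt h01⟩ : Fin n) = i0 from rfl, ← hπa]; simp
      have eb : (π⁻¹ : Equiv.Perm (Fin n)) ⟨0 + 1, h01⟩ = b := by
        rw [show (⟨0 + 1, h01⟩ : Fin n) = i1 from rfl, ← hπb]; simp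
      rw [ea, eb] at e1
      exact e1
    -- now derive the parity statement
    by_cases hall : ∀ i : Fin n, Even (d i)
    · left
      intro i j
      rw [Int.even_iff.mp (hall i), Int.even_iff.mp (hall j)]
    · push_neg at hall
      obtain ⟨i0, hi0⟩ := hall
      rw [Int.not_even_iff_odd] at hi0
      by_cases hrest : ∀ j : Fin n, j ≠ i0 → Even (d j)
      · right
        refine ⟨i0, hi0, fun j hj => ?_⟩
        by_contra hji
        exact (Int.not_even_iff_odd.mpr hj) (hrest j hji)
      · push_neg at hrest
        obtain ⟨j0, hj0ne, hj0⟩ := hrest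
        rw [Int.not_even_iff_odd] at hj0
        -- two odds; claim all are odd
        left
        have hodd : ∀ k : Fin n, Odd (d k) := by
          intro k
          by_contra hke
          rw [Int.not_odd_iff_even] at hke
          -- k is even; k ≠ i0 since d i0 odd
          have hki : k ≠ i0 := fun h => (Int.not_even_iff_odd.mpr hi0) (h ▸ hke)
          have p1 := pair k i0 hki
          have p2 := pair i0 j0 (Ne.symm hj0ne)
          rw [neg_one_zpow_eq_iff] at p1 p2
          have e1 : Even (d k * d i0) := hke.mul_right _
          have o2 : ¬ Even (d i0 * d j0) := by
            rw [Int.not_even_iff_odd]; exact hi0.mul hj0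
          rw [p1] at e1
          rw [p2] at o2
          exact o2 e1
        intro i j
        rw [Int.odd_iff.mp (hodd i), Int.odd_iff.mp (hodd j)]
  · -- backward direction
    intro P
    -- all distinct-pair products have the same parity
    have pairconst : ∀ a b a' b' : Fin n, a ≠ b → a' ≠ b' →
        ((-1 : ℤˣ) ^ (d a * d b) = (-1 : ℤˣ) ^ (d a' * d b')) := by
      intro a b a' b' hab hab'
      rw [neg_one_zpow_eq_iff]
      rcases P with P | P
      · by_cases h0 : Even (d a)
        · have hall : ∀ i : Fin n, Even (d i) := by
            intro i
            rw [Int.even_iff] at h0 ⊢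
            rw [P i a]; exact h0
          simp [Int.even_mul, hall a, hall a']
        · rw [Int.not_even_iff_odd] at h0
          have hall : ∀ i : Fin n, Odd (d i) := by
            intro i
            rw [Int.odd_iff] at h0 ⊢
            rw [P i a]; exact h0
          constructor <;> intro h <;> exfalso
          · rw [Int.even_mul] at h
            rcases h with h | h
            · exact (Int.not_even_iff_odd.mpr (hall a)) h
            · exact (Int.not_even_iff_odd.mpr (hall b)) h
          · rw [Int.even_mul] at h
            rcases h with h | h
            · exact (Int.not_even_iff_odd.mpr (hall a')) h
            · exact (Int.not_even_iff_odd.mpr (hall b')) h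
      · obtain ⟨i0, hi0, huniq⟩ := P
        have he : ∀ x y : Fin n, x ≠ y → Even (d x * d y) := by
          intro x y hxy
          rw [Int.even_mul]
          by_contra hc
          push_neg at hc
          obtain ⟨hx, hy⟩ := hc
          rw [Int.not_even_iff_odd] at hx hy
          exact hxy ((huniq x hx).trans (huniq y hy).symm)
        simp only [he a b hab, he a' b' hab']
    -- κ at adjacent swaps is independent of ρ
    have genconst : ∀ (i : ℕ) (h : i + 1 < n) (ρ : Equiv.Perm (Fin n)),
        κ (Equiv.swap ⟨i, Nat.lt_of_succ_lt h⟩ ⟨i + 1, h⟩) ρ =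
        κ (Equiv.swap ⟨i, Nat.lt_of_succ_lt h⟩ ⟨i + 1, h⟩) 1 := by
      intro i h ρ
      rw [hgen i h ρ, hgen i h 1]
      apply pairconst
      · intro hc
        exact absurd (congrArg Fin.val (ρ⁻¹.injective hc)) (by simp)
      · intro hc
        exact absurd (congrArg Fin.val ((1 : Equiv.Perm (Fin n))⁻¹.injective hc))
          (by simp)
    -- κ 1 ρ = 1
    have kone : ∀ ρ, κ 1 ρ = 1 := by
      intro ρ
      have := hcoc 1 1 ρ
      rw [one_mul, one_mul] at this
      exact mul_left_cancel (a := κ 1 ρ) (by rw [mul_one]; exact this.symm)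
    -- κ σ ρ is independent of ρ, for all σ
    obtain ⟨m, rfl⟩ : ∃ m, n = m + 1 := ⟨n - 1, by omega⟩
    have main : ∀ σ : Equiv.Perm (Fin (m + 1)), ∀ ρ, κ σ ρ = κ σ 1 := by
      intro σ
      have hσ : σ ∈ Submonoid.closure
          (Set.range fun i : Fin m ↦ Equiv.swap i.castSucc i.succ) := by
        rw [Equiv.Perm.mclosure_swap_castSucc_succ]; trivial
      induction hσ using Submonoid.closure_induction with
      | one => intro ρ; rw [kone, kone]
      | mem x hx =>
        intro ρ
        obtain ⟨i, rfl⟩ := hx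
        have hi : (i : ℕ) + 1 < m + 1 := by omega
        have hcs : i.castSucc = (⟨(i : ℕ), Nat.lt_of_succ_lt hi⟩ : Fin (m + 1)) := by
          simp [Fin.ext_iff]
        have hs : i.succ = (⟨(i : ℕ) + 1, hi⟩ : Fin (m + 1)) := by
          simp [Fin.ext_iff]
        show κ (Equiv.swap i.castSucc i.succ) ρ = κ (Equiv.swap i.castSucc i.succ) 1
        rw [hcs, hs]
        exact genconst (i : ℕ) hi ρ
      | mul x y hx hy ihx ihy =>
        intro ρ
        rw [hcoc x y ρ, hcoc x y 1, ihx (y * ρ), ihx (y * 1), ihy ρ]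
    intro σ τ
    rw [hcoc σ τ 1, mul_one, main σ τ]
end

section
/- Let n ≥ 3 and κ the Koszul sign map determined by a degree function d. The map κ(-, e) is constant equal to 1 if and only if all the integers d(1),...,d(n) are even with possibly one exception. -/
lemma odd_neg_one_uzpow {k : ℤ} (h : Odd k) : (-1 : ℤˣ) ^ k = -1 := by
  obtain ⟨c, rfl⟩ := h
  rw [zpow_add, zpow_one, zpow_mul]
  have h2 : ((-1 : ℤˣ) ^ (2 : ℤ)) = 1 := by
    rw [show (2:ℤ) = (2:ℕ) from rfl, zpow_natCast]
    decide
  rw [h2, one_zpow, one_mul]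

theorem koszul_trivial_iff_almost_even (n : ℕ) (hn : 3 ≤ n) (d : Fin n → ℤ)
    (κ : Equiv.Perm (Fin n) → Equiv.Perm (Fin n) → ℤˣ) (hκ : IsKoszul d κ) :
    (∀ σ : Equiv.Perm (Fin n), κ σ 1 = 1) ↔
      (∀ i j : Fin n, Odd (d i) → Odd (d j) → i = j) := by
  obtain ⟨hc, hs⟩ := hκ
  obtain ⟨m, rfl⟩ : ∃ m, n = m + 1 := ⟨n - 1, by omega⟩
  constructor
  · intro h1 i j hi hj
    by_contra hij
    have hall : ∀ σ τ, κ σ τ = 1 := by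
      intro σ τ
      have h := hc σ τ 1
      rw [mul_one, h1, h1] at h
      simpa using h.symm
    set a : Fin (m + 1) := ⟨0, by omega⟩ with ha
    set b : Fin (m + 1) := ⟨1, by omega⟩ with hb
    have hab : a ≠ b := by simp [ha, hb, Fin.ext_iff]
    set π₁ := Equiv.swap a i with hπ₁
    set c := π₁ j with hcdef
    have hca : c ≠ a := by
      intro h
      apply hij
      have : π₁ j = π₁ i := by
        rw [hcdef] at h; rw [h, hπ₁, Equiv.swap_apply_right]
      exact (π₁.injective this).symm ▸ rfl
    have hcb' : π₁ c = j := by rw [hcdef, hπ₁]; exact Equiv.swap_apply_self _ _ _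
    set π₂ := Equiv.swap b c with hπ₂
    set π := π₁ * π₂ with hπ
    have hπa : π a = i := by
      have h2 : π₂ a = a := Equiv.swap_apply_of_ne_of_ne hab (Ne.symm hca)
      simp [hπ, h2, hπ₁, Equiv.swap_apply_left]
    have hπb : π b = j := by
      have h2 : π₂ b = c := Equiv.swap_apply_left _ _
      simp [hπ, h2, hcb']
    have hlt : (0 : ℕ) + 1 < m + 1 := by omega
    have hkey := hs 0 hlt π⁻¹
    rw [inv_inv] at hkey
    have e0 : (⟨0, Nat.lt_of_succ_lt hlt⟩ : Fin (m+1)) = a := rfl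
    have e1 : (⟨0 + 1, hlt⟩ : Fin (m+1)) = b := rfl
    rw [e0, e1, hπa, hπb, hall] at hkey
    have hodd : Odd (d i * d j) := hi.mul hj
    have : (1 : ℤˣ) = -1 := hkey.trans (odd_neg_one_uzpow hodd)
    exact absurd this (by decide)
  · intro hodd
    have key : ∀ σ ρ : Equiv.Perm (Fin (m+1)), κ σ ρ = 1 := by
      have hone : ∀ ρ, κ 1 ρ = 1 := by
        intro ρ
        have h := hc 1 1 ρ
        rw [one_mul, one_mul] at h
        exact (mul_eq_left.mp h.symm)
      intro σ
      have hmem : σ ∈ Submonoid.closure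
          (Set.range fun i : Fin m => Equiv.swap i.castSucc i.succ) := by
        rw [Equiv.Perm.mclosure_swap_castSucc_succ]; trivial
      induction hmem using Submonoid.closure_induction with
      | one => exact hone
      | mul x y _ _ hx hy =>
        intro ρ
        rw [hc x y ρ, hx, hy, mul_one]
      | mem x hx =>
        obtain ⟨i, rfl⟩ := hx
        intro ρ
        show κ (Equiv.swap i.castSucc i.succ) ρ = 1
        have hlt : (i : ℕ) + 1 < m + 1 := by omega
        have e0 : Fin.castSucc i = (⟨(i : ℕ), Nat.lt_of_succ_lt hlt⟩ : Fin (m+1)) := rfl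
        have e1 : Fin.succ i = (⟨(i : ℕ) + 1, hlt⟩ : Fin (m+1)) := rfl
        rw [e0, e1, hs (i : ℕ) hlt ρ]
        set a := ρ⁻¹ (⟨(i : ℕ), Nat.lt_of_succ_lt hlt⟩ : Fin (m+1))
        set b := ρ⁻¹ (⟨(i : ℕ) + 1, hlt⟩ : Fin (m+1))
        have hne : a ≠ b := by
          intro h
          have := ρ⁻¹.injective h
          simp [Fin.ext_iff] at this
        have heven : Even (d a * d b) := by
          rcases Int.even_or_odd (d a) with h | h
          · exact h.mul_right _
          · rcases Int.even_or_odd (d b) with h' | h'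
            · exact h'.mul_left _
            · exact absurd (hodd a b h h') hne
        exact heven.neg_one_zpow
    intro σ
    exact key σ 1
end

section
/- Let n ≥ 3 and suppose the parities of d(1),...,d(n) include at least two odd values and at least one even value. Then there exist σ, τ ∈ S_n with κ(στ, e) ≠ κ(σ, e)·κ(τ, e); i.e., κ(-, e) is not a group homomorphism. -/
private lemma units_neg_one_zpow_odd {m : ℤ} (hm : Odd m) : (-1 : ℤˣ) ^ m = -1 := by
  obtain ⟨k, hk⟩ := hm
  subst hk
  rw [zpow_add, zpow_one, zpow_mul, zpow_two, neg_mul_neg, one_mul, one_zpow, one_mul]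

private lemma units_neg_one_zpow_even {m : ℤ} (hm : Even m) : (-1 : ℤˣ) ^ m = 1 :=
  Even.neg_one_zpow hm

private lemma exists_perm_inv_eq {n : ℕ} (a b x y : Fin n) (hab : a ≠ b) (hxy : x ≠ y) :
    ∃ τ : Equiv.Perm (Fin n), τ⁻¹ a = x ∧ τ⁻¹ b = y := by
  set s := Equiv.swap a x with hs
  refine ⟨(s * Equiv.swap b (s y))⁻¹, ?_, ?_⟩
  · rw [inv_inv]
    have h1 : s y ≠ a := by
      intro h
      have := congrArg s h
      rw [Equiv.swap_apply_self, Equiv.swap_apply_left] at this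
      exact hxy this.symm
    simp only [Equiv.Perm.mul_apply]
    rw [Equiv.swap_apply_of_ne_of_ne hab h1.symm, Equiv.swap_apply_left]
  · rw [inv_inv]
    simp only [Equiv.Perm.mul_apply]
    rw [Equiv.swap_apply_left, Equiv.swap_apply_self]

theorem koszul_not_hom_of_mixed_parity (n : ℕ) (hn : 3 ≤ n) (d : Fin n → ℤ)
    (hodd : ∃ i j : Fin n, i ≠ j ∧ Odd (d i) ∧ Odd (d j))
    (heven : ∃ k : Fin n, Even (d k))
    (κ : Equiv.Perm (Fin n) → Equiv.Perm (Fin n) → ℤˣ) (hκ : IsKoszul d κ) :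
    ∃ σ τ : Equiv.Perm (Fin n), κ (σ * τ) 1 ≠ κ σ 1 * κ τ 1 := by
  obtain ⟨i, j, hij, hdi, hdj⟩ := hodd
  obtain ⟨k, hdk⟩ := heven
  have h01 : (0 : ℕ) + 1 < n := by omega
  set z0 : Fin n := ⟨0, Nat.lt_of_succ_lt h01⟩ with hz0
  set z1 : Fin n := ⟨0 + 1, h01⟩ with hz1
  have hz01 : z0 ≠ z1 := by simp [hz0, hz1, Fin.ext_iff]
  set σ : Equiv.Perm (Fin n) := Equiv.swap z0 z1 with hσ
  -- choose targets depending on parity of d z0 * d z1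
  have key : ∃ τ : Equiv.Perm (Fin n),
      Odd (d (τ⁻¹ z0) * d (τ⁻¹ z1)) ↔ ¬ Odd (d ((1 : Equiv.Perm (Fin n))⁻¹ z0) *
        d ((1 : Equiv.Perm (Fin n))⁻¹ z1)) := by
    simp only [inv_one, Equiv.Perm.one_apply]
    by_cases hP : Odd (d z0 * d z1)
    · have hik : i ≠ k := by
        intro h; rw [h] at hdi; exact (Int.not_even_iff_odd.mpr hdi) hdk
      obtain ⟨τ, ht0, ht1⟩ := exists_perm_inv_eq z0 z1 i k hz01 hik
      refine ⟨τ, ?_⟩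
      rw [ht0, ht1]
      exact iff_of_false (fun h' => (Int.not_even_iff_odd.mpr h') (hdk.mul_left _))
        (not_not_intro hP)
    · obtain ⟨τ, ht0, ht1⟩ := exists_perm_inv_eq z0 z1 i j hz01 hij
      refine ⟨τ, ?_⟩
      rw [ht0, ht1]
      exact iff_of_true (hdi.mul hdj) hP
  obtain ⟨τ, hτ⟩ := key
  refine ⟨σ, τ, ?_⟩
  have hc := hκ.1 σ τ 1
  rw [mul_one] at hc
  rw [hc]
  intro h
  have h2 : κ σ τ = κ σ 1 := mul_right_cancel h
  have e1 := hκ.2 0 h01 τ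
  have e2 := hκ.2 0 h01 1
  rw [← hz0, ← hz1, ← hσ] at e1 e2
  rw [e1, e2] at h2
  by_cases hP : Odd (d (τ⁻¹ z0) * d (τ⁻¹ z1))
  · have hQ := hτ.mp hP
    rw [units_neg_one_zpow_odd hP, units_neg_one_zpow_even (Int.not_odd_iff_even.mp hQ)] at h2
    exact absurd h2 (by decide)
  · have hQ := (hτ.not.mp hP : ¬¬_)
    rw [not_not] at hQ
    rw [units_neg_one_zpow_even (Int.not_odd_iff_even.mp hP), units_neg_one_zpow_odd hQ] at h2
    exact absurd h2 (by decide)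
end
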